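/- arXiv:2304.02327 — 3 statements merged into one kernel-verified Lean document; each statement's English description precedes it below -/
import Mathlib

section
/- Let d ≥ 1, let n_1, …, n_d be positive integers, and for each μ let A_μ be a complex n_μ × n_μ matrix. Let K be the Kronecker sum of A_d, …, A_1, i.e., the complex matrix indexed by tuples (i_1,…,i_d), (j_1,…,j_d) with entries K_{(i_1,…,i_d),(j_1,…,j_d)} = Σ_{μ=1}^d A_μ(i_μ, j_μ) · Π_{ν≠μ} δ_{i_ν j_ν}. For ℓ ≥ 1 and τ ∈ ℝ, let P_ℓ(τ) be the Kronecker product of φ_ℓ(τA_d), …, φ_ℓ(τA_1), i.e., the matrix with entries P_ℓ(τ)_{(i_1,…,i_d),(j_1,…,j_d)} = Π_{μ=1}^d φ_ℓ(τA_μ)(i_μ, j_μ). Then for every ℓ ≥ 1 there exists a constant C > 0 such that for all τ ∈ [0,1], ‖φ_ℓ(τK) − (ℓ!)^{d−1} P_ℓ(τ)‖ ≤ C τ², where ‖·‖ is any fixed matrix norm. -/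
open scoped Matrix

/-- The matrix φ-function, defined by its everywhere-convergent power series
`φ_ℓ(X) = ∑_{i=0}^∞ X^i / (i+ℓ)!`. -/
noncomputable def phiFun {n : Type*} [Fintype n] [DecidableEq n] (ℓ : ℕ)
    (X : Matrix n n ℂ) : Matrix n n ℂ :=
  ∑' i : ℕ, ((i + ℓ).factorial : ℂ)⁻¹ • X ^ i

attribute [local instance] Matrix.normedAddCommGroup

set_option maxHeartbeats 1600000

namespace PhiAux

lemma summable_aux {r : ℝ} (hr : 0 ≤ r) (ℓ : ℕ) :
    Summable (fun k : ℕ => r ^ k / (k + ℓ).factorial) := by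
  refine Summable.of_nonneg_of_le (fun k => by positivity) (fun k => ?_)
    (Real.summable_pow_div_factorial r)
  apply div_le_div_of_nonneg_left (by positivity) (by positivity)
  exact_mod_cast Nat.factorial_le (Nat.le_add_right k ℓ)

lemma exists_entry_bound {m : Type*} [Fintype m] (X : Matrix m m ℂ) :
    ∃ B, 0 ≤ B ∧ ∀ a b, ‖X a b‖ ≤ B := by
  classical
  refine ⟨∑ a, ∑ b, ‖X a b‖, by positivity, fun a b => ?_⟩
  calc ‖X a b‖ ≤ ∑ b', ‖X a b'‖ :=
        Finset.single_le_sum (fun _ _ => norm_nonneg _) (Finset.mem_univ b)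
    _ ≤ ∑ a', ∑ b', ‖X a' b'‖ :=
        Finset.single_le_sum (f := fun a' => ∑ b', ‖X a' b'‖)
          (fun _ _ => Finset.sum_nonneg fun _ _ => norm_nonneg _) (Finset.mem_univ a)

lemma entry_pow_le {m : Type*} [Fintype m] [DecidableEq m] (X : Matrix m m ℂ) {B : ℝ}
    (hB : ∀ a b, ‖X a b‖ ≤ B) (k : ℕ) (a b : m) :
    ‖(X ^ k) a b‖ ≤ ((Fintype.card m : ℝ) * B) ^ k := by
  induction k generalizing a b with
  | zero =>
    simp only [pow_zero, Matrix.one_apply]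
    split <;> simp
  | succ k ih =>
    have hB0 : 0 ≤ B := le_trans (norm_nonneg _) (hB a b)
    rw [pow_succ, Matrix.mul_apply]
    calc ‖∑ c, (X ^ k) a c * X c b‖ ≤ ∑ c, ‖(X ^ k) a c * X c b‖ := norm_sum_le _ _
      _ ≤ ∑ _c : m, ((Fintype.card m : ℝ) * B) ^ k * B := by
          refine Finset.sum_le_sum fun c _ => ?_
          rw [norm_mul]
          exact mul_le_mul (ih a c) (hB c b) (norm_nonneg _) (by positivity)
      _ = ((Fintype.card m : ℝ) * B) ^ (k + 1) := by
          rw [Finset.sum_const, Finset.card_univ, nsmul_eq_mul]; ring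

lemma phi_entry (ℓ : ℕ) {m : Type*} [Fintype m] [DecidableEq m] (X : Matrix m m ℂ) (a b : m) :
    HasSum (fun k : ℕ => (((k + ℓ).factorial : ℂ))⁻¹ * (X ^ k) a b) (phiFun ℓ X a b) ∧
      Summable (fun k : ℕ => ‖(((k + ℓ).factorial : ℂ))⁻¹ * (X ^ k) a b‖) := by
  obtain ⟨B, hB0, hB⟩ := exists_entry_bound X
  set r : ℝ := (Fintype.card m : ℝ) * B with hr
  have hr0 : 0 ≤ r := by positivity
  have hbound : ∀ (u v : m) (k : ℕ),
      ‖(((k + ℓ).factorial : ℂ))⁻¹ * (X ^ k) u v‖ ≤ r ^ k / (k + ℓ).factorial := by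
    intro u v k
    rw [norm_mul, norm_inv, Complex.norm_natCast, div_eq_inv_mul]
    exact mul_le_mul_of_nonneg_left (entry_pow_le X hB k u v) (by positivity)
  have hsumm : ∀ u v : m,
      Summable (fun k : ℕ => ‖(((k + ℓ).factorial : ℂ))⁻¹ * (X ^ k) u v‖) := fun u v =>
    Summable.of_nonneg_of_le (fun _ => norm_nonneg _) (hbound u v) (summable_aux hr0 ℓ)
  have hmat : Summable (fun k : ℕ => ((k + ℓ).factorial : ℂ)⁻¹ • X ^ k) := by
    apply Pi.summable.2
    intro u
    rw [Pi.summable]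
    intro v
    exact ((hsumm u v).of_norm).congr fun k => by
      simp [Matrix.smul_apply, smul_eq_mul]
  have h1 : HasSum (fun k : ℕ => ((k + ℓ).factorial : ℂ)⁻¹ • X ^ k) (phiFun ℓ X) := hmat.hasSum
  have h2 := Pi.hasSum.1 (Pi.hasSum.1 h1 a) b
  refine ⟨h2.congr_fun fun k => ?_, hsumm a b⟩
  simp [Matrix.smul_apply, smul_eq_mul]

lemma phi_entry_tau (ℓ : ℕ) {m : Type*} [Fintype m] [DecidableEq m] (X : Matrix m m ℂ)
    (a b : m) (τ : ℝ) :
    HasSum (fun k : ℕ => (τ : ℂ) ^ k * ((((k + ℓ).factorial : ℂ))⁻¹ * (X ^ k) a b))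
      (phiFun ℓ (τ • X) a b) := by
  refine (phi_entry ℓ (τ • X) a b).1.congr_fun fun k => ?_
  rw [smul_pow, Matrix.smul_apply, Complex.real_smul]
  push_cast
  ring

lemma hasSum_pi_prod_real (d : ℕ) (f : Fin d → ℕ → ℝ) (h0 : ∀ μ k, 0 ≤ f μ k)
    (hf : ∀ μ, Summable (f μ)) :
    HasSum (fun a : Fin d → ℕ => ∏ μ, f μ (a μ)) (∏ μ, ∑' k, f μ k) := by
  induction d with
  | zero =>
    simp only [Finset.univ_eq_empty, Finset.prod_empty]
    exact hasSum_single (f := fun _ : Fin 0 → ℕ => (1 : ℝ)) (fun _ => 0)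
      (fun b' hb => absurd (funext fun i => i.elim0) hb)
  | succ d ih =>
    have htail : HasSum (fun p : Fin d → ℕ => ∏ μ : Fin d, f μ.succ (p μ))
        (∏ μ : Fin d, ∑' k, f μ.succ k) :=
      ih (fun μ => f μ.succ) (fun μ k => h0 μ.succ k) (fun μ => hf μ.succ)
    have hpairs : Summable (fun z : ℕ × (Fin d → ℕ) => f 0 z.1 * ∏ μ, f μ.succ (z.2 μ)) := by
      apply summable_mul_of_summable_norm (f := f 0) (g := fun p : Fin d → ℕ => ∏ μ, f μ.succ (p μ))
      · exact (hf 0).congr fun k => (Real.norm_of_nonneg (h0 0 k)).symm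
      · exact htail.summable.congr fun p =>
          (Real.norm_of_nonneg (Finset.prod_nonneg fun μ _ => h0 μ.succ (p μ))).symm
    have hmul := ((hf 0).hasSum.mul htail hpairs)
    have he := (Fin.consEquiv (fun _ : Fin (d + 1) => ℕ)).hasSum_iff
      (f := fun a : Fin (d + 1) → ℕ => ∏ μ, f μ (a μ))
      (a := ∏ μ : Fin (d + 1), ∑' k, f μ k)
    rw [← he]
    rw [Fin.prod_univ_succ]
    refine hmul.congr_fun fun z => ?_
    simp only [Function.comp_apply, Fin.consEquiv_apply, Fin.prod_univ_succ,
      Fin.cons_zero, Fin.cons_succ]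

lemma hasSum_pi_prod (d : ℕ) (f : Fin d → ℕ → ℂ) (hf : ∀ μ, Summable fun k => ‖f μ k‖) :
    HasSum (fun a : Fin d → ℕ => ∏ μ, f μ (a μ)) (∏ μ, ∑' k, f μ k) := by
  induction d with
  | zero =>
    simp only [Finset.univ_eq_empty, Finset.prod_empty]
    exact hasSum_single (f := fun _ : Fin 0 → ℕ => (1 : ℂ)) (fun _ => 0)
      (fun b' hb => absurd (funext fun i => i.elim0) hb)
  | succ d ih =>
    have htail : HasSum (fun p : Fin d → ℕ => ∏ μ : Fin d, f μ.succ (p μ))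
        (∏ μ : Fin d, ∑' k, f μ.succ k) :=
      ih (fun μ => f μ.succ) (fun μ => hf μ.succ)
    have htailnorm : Summable (fun p : Fin d → ℕ => ‖∏ μ : Fin d, f μ.succ (p μ)‖) := by
      have := (hasSum_pi_prod_real d (fun μ k => ‖f μ.succ k‖) (fun μ k => norm_nonneg _)
        (fun μ => hf μ.succ)).summable
      exact this.congr fun p => (norm_prod _ _).symm
    have hpairs : Summable (fun z : ℕ × (Fin d → ℕ) => f 0 z.1 * ∏ μ, f μ.succ (z.2 μ)) :=
      summable_mul_of_summable_norm (R := ℂ) (f := f 0)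
        (g := fun p : Fin d → ℕ => ∏ μ : Fin d, f μ.succ (p μ)) (hf 0) htailnorm
    have hmul := ((hf 0).of_norm.hasSum.mul htail hpairs)
    have he := (Fin.consEquiv (fun _ : Fin (d + 1) => ℕ)).hasSum_iff
      (f := fun a : Fin (d + 1) → ℕ => ∏ μ, f μ (a μ))
      (a := ∏ μ : Fin (d + 1), ∑' k, f μ k)
    rw [← he]
    rw [Fin.prod_univ_succ]
    refine hmul.congr_fun fun z => ?_
    simp only [Function.comp_apply, Fin.consEquiv_apply, Fin.prod_univ_succ,
      Fin.cons_zero, Fin.cons_succ]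

variable {d : ℕ} {n : Fin d → ℕ}

lemma P_entry_hasSum (ℓ : ℕ) (A : ∀ μ : Fin d, Matrix (Fin (n μ)) (Fin (n μ)) ℂ)
    (τ : ℝ) (i j : ∀ μ, Fin (n μ)) :
    HasSum (fun a : Fin d → ℕ => (τ : ℂ) ^ (∑ μ, a μ) *
        ∏ μ, (((a μ + ℓ).factorial : ℂ))⁻¹ * ((A μ) ^ (a μ)) (i μ) (j μ))
      (∏ μ, phiFun ℓ (τ • A μ) (i μ) (j μ)) := by
  have h1 : ∀ μ, HasSum (fun k : ℕ => (((k + ℓ).factorial : ℂ))⁻¹ * ((τ • A μ) ^ k) (i μ) (j μ))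
      (phiFun ℓ (τ • A μ) (i μ) (j μ)) := fun μ => (phi_entry ℓ (τ • A μ) (i μ) (j μ)).1
  have h3 := hasSum_pi_prod d
    (fun μ k => (((k + ℓ).factorial : ℂ))⁻¹ * ((τ • A μ) ^ k) (i μ) (j μ))
    (fun μ => (phi_entry ℓ (τ • A μ) (i μ) (j μ)).2)
  rw [Finset.prod_congr rfl fun μ _ => (h1 μ).tsum_eq] at h3
  refine h3.congr_fun fun a => ?_
  have hterm : ∀ μ : Fin d, (((a μ + ℓ).factorial : ℂ))⁻¹ * ((τ • A μ) ^ (a μ)) (i μ) (j μ)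
      = (τ : ℂ) ^ (a μ) * ((((a μ + ℓ).factorial : ℂ))⁻¹ * ((A μ) ^ (a μ)) (i μ) (j μ)) := by
    intro μ
    rw [smul_pow, Matrix.smul_apply, Complex.real_smul]
    push_cast
    ring
  rw [← Finset.prod_pow_eq_pow_sum, ← Finset.prod_mul_distrib]
  exact Finset.prod_congr rfl fun μ _ => (hterm μ).symm

lemma P_entry_norm_summable (ℓ : ℕ) (A : ∀ μ : Fin d, Matrix (Fin (n μ)) (Fin (n μ)) ℂ)
    (i j : ∀ μ, Fin (n μ)) :
    Summable (fun a : Fin d → ℕ =>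
      ‖∏ μ, (((a μ + ℓ).factorial : ℂ))⁻¹ * ((A μ) ^ (a μ)) (i μ) (j μ)‖) := by
  have h := (hasSum_pi_prod_real d
    (fun μ k => ‖(((k + ℓ).factorial : ℂ))⁻¹ * ((A μ) ^ k) (i μ) (j μ)‖)
    (fun μ k => norm_nonneg _)
    (fun μ => (phi_entry ℓ (A μ) (i μ) (j μ)).2)).summable
  exact h.congr fun a => (norm_prod _ _).symm

end PhiAux

theorem phi_direction_splitting (d : ℕ) (hd : 1 ≤ d) (n : Fin d → ℕ)
    (hn : ∀ μ, 1 ≤ n μ)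
    (A : ∀ μ : Fin d, Matrix (Fin (n μ)) (Fin (n μ)) ℂ)
    (K : Matrix (∀ μ, Fin (n μ)) (∀ μ, Fin (n μ)) ℂ)
    (hK : ∀ i j, K i j =
      ∑ μ, A μ (i μ) (j μ) *
        ∏ ν ∈ Finset.univ.erase μ, (if i ν = j ν then (1 : ℂ) else 0))
    (P : ℕ → ℝ → Matrix (∀ μ, Fin (n μ)) (∀ μ, Fin (n μ)) ℂ)
    (hP : ∀ ℓ τ i j, P ℓ τ i j = ∏ μ, phiFun ℓ (τ • A μ) (i μ) (j μ))
    (ℓ : ℕ) (hℓ : 1 ≤ ℓ) :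
    ∃ C > 0, ∀ τ ∈ Set.Icc (0 : ℝ) 1,
      ‖phiFun ℓ (τ • K) - ((ℓ.factorial : ℂ) ^ (d - 1)) • P ℓ τ‖ ≤ C * τ ^ 2 := by
  classical
  open PhiAux in
  obtain ⟨e, rfl⟩ : ∃ e, d = e + 1 := ⟨d - 1, (Nat.succ_pred_eq_of_pos hd).symm⟩
  simp only [Nat.add_sub_cancel]
  have hfac : ((ℓ.factorial : ℂ)) ≠ 0 := Nat.cast_ne_zero.2 ℓ.factorial_ne_zero
  have q2 : (ℓ.factorial : ℂ) ^ e * ((ℓ.factorial : ℂ)⁻¹) ^ e = 1 := by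
    rw [← mul_pow, mul_inv_cancel₀ hfac, one_pow]
  have key : ∀ i j : (∀ μ, Fin (n μ)), ∃ C, 0 < C ∧ ∀ τ ∈ Set.Icc (0 : ℝ) 1,
      ‖phiFun ℓ (τ • K) i j - (ℓ.factorial : ℂ) ^ e * P ℓ τ i j‖ ≤ C * τ ^ 2 := by
    intro i j
    set G : ℕ → ℂ := fun k => (((k + ℓ).factorial : ℂ))⁻¹ * (K ^ k) i j with hGdef
    set F : (Fin (e + 1) → ℕ) → ℂ :=
      fun a => ∏ μ, (((a μ + ℓ).factorial : ℂ))⁻¹ * ((A μ) ^ (a μ)) (i μ) (j μ) with hFdef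
    set S : Finset (Fin (e + 1) → ℕ) :=
      insert 0 (Finset.univ.image fun μ => Pi.single μ 1) with hSdef
    -- summability
    have hGs : Summable fun k => ‖G k‖ := (phi_entry ℓ K i j).2
    have hGs2 : Summable fun k => ‖G (k + 2)‖ := (summable_nat_add_iff 2).2 hGs
    have hFs : Summable fun a => ‖F a‖ := P_entry_norm_summable ℓ A i j
    have hFsc : Summable fun a : ↑((↑S : Set (Fin (e + 1) → ℕ))ᶜ) => ‖F a‖ :=
      hFs.subtype _
    set CG : ℝ := ∑' k, ‖G (k + 2)‖ with hCGdef
    set CF : ℝ := ∑' a : ↑((↑S : Set (Fin (e + 1) → ℕ))ᶜ), ‖F a‖ with hCFdef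
    set c : ℝ := ‖(ℓ.factorial : ℂ) ^ e‖ with hcdef
    have hCG0 : 0 ≤ CG := tsum_nonneg fun _ => norm_nonneg _
    have hCF0 : 0 ≤ CF := tsum_nonneg fun _ => norm_nonneg _
    have hc0 : 0 ≤ c := norm_nonneg _
    -- the cancellation identity
    have hG0 : G 0 = (ℓ.factorial : ℂ)⁻¹ * (if i = j then 1 else 0) := by
      simp [hGdef, Matrix.one_apply]
    have hG1 : G 1 = (((1 + ℓ).factorial : ℂ))⁻¹ * K i j := by
      simp [hGdef]
    have hF0 : F 0 = ((ℓ.factorial : ℂ)⁻¹) ^ (e + 1) * (if i = j then 1 else 0) := by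
      rw [hFdef]
      simp only [Pi.zero_apply, pow_zero, Nat.zero_add, Matrix.one_apply]
      rw [Finset.prod_mul_distrib, Finset.prod_const, Finset.card_univ, Fintype.card_fin,
        Finset.prod_boole]
      by_cases h : i = j
      · simp [h]
      · have h' : ¬ ∀ μ ∈ (Finset.univ : Finset (Fin (e + 1))), i μ = j μ := by
          simpa [funext_iff] using h
        rw [if_neg h', if_neg h]
    have hF1 : ∀ μ, F (Pi.single μ 1) =
        (((1 + ℓ).factorial : ℂ))⁻¹ * A μ (i μ) (j μ) * ((ℓ.factorial : ℂ)⁻¹) ^ e *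
          ∏ ν ∈ Finset.univ.erase μ, (if i ν = j ν then (1 : ℂ) else 0) := by
      intro μ
      simp only [hFdef]
      rw [← Finset.mul_prod_erase Finset.univ _ (Finset.mem_univ μ)]
      have herase : ∀ ν ∈ Finset.univ.erase μ,
          ((((Pi.single μ 1 : Fin (e + 1) → ℕ) ν + ℓ).factorial : ℂ))⁻¹ *
            ((A ν) ^ ((Pi.single μ 1 : Fin (e + 1) → ℕ) ν)) (i ν) (j ν)
            = (ℓ.factorial : ℂ)⁻¹ * (if i ν = j ν then (1 : ℂ) else 0) := by
        intro ν hν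
        have hνμ : ν ≠ μ := (Finset.mem_erase.1 hν).1
        have h0 : (Pi.single μ 1 : Fin (e + 1) → ℕ) ν = 0 := Pi.single_eq_of_ne hνμ 1
        rw [h0]
        simp [Matrix.one_apply]
      rw [Finset.prod_congr rfl herase, Finset.prod_mul_distrib, Finset.prod_const,
        Finset.card_erase_of_mem (Finset.mem_univ μ), Finset.card_univ, Fintype.card_fin,
        Pi.single_eq_same, Nat.add_sub_cancel, pow_one]
      ring
    have hsumF1 : ∑ μ, F (Pi.single μ 1) =
        (((1 + ℓ).factorial : ℂ))⁻¹ * ((ℓ.factorial : ℂ)⁻¹) ^ e * K i j := by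
      rw [hK i j, Finset.mul_sum]
      exact Finset.sum_congr rfl fun μ _ => by rw [hF1 μ]; ring
    have hcan : ∀ τ : ℝ, G 0 + (τ : ℂ) * G 1 =
        (ℓ.factorial : ℂ) ^ e * (F 0 + (τ : ℂ) * ∑ μ, F (Pi.single μ 1)) := by
      intro τ
      rw [hG0, hG1, hF0, hsumF1, pow_succ]
      linear_combination (-((ℓ.factorial : ℂ)⁻¹ * (if i = j then (1 : ℂ) else 0)) -
        (τ : ℂ) * (((1 + ℓ).factorial : ℂ))⁻¹ * K i j) * q2
    -- finset S facts
    have h0S : (0 : Fin (e + 1) → ℕ) ∉ Finset.univ.image fun μ => Pi.single μ 1 := by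
      simp only [Finset.mem_image, Finset.mem_univ, true_and, not_exists]
      intro μ h
      have := congrFun h μ
      rw [Pi.single_eq_same] at this
      exact one_ne_zero this
    have hinj : ∀ μ ∈ Finset.univ, ∀ ν ∈ Finset.univ,
        (Pi.single μ 1 : Fin (e + 1) → ℕ) = Pi.single ν 1 → μ = ν := by
      intro μ _ ν _ h
      by_contra hne
      have := congrFun h μ
      rw [Pi.single_eq_same, Pi.single_eq_of_ne hne] at this
      exact one_ne_zero this
    have hdeg : ∀ a : Fin (e + 1) → ℕ, a ∉ S → 2 ≤ ∑ μ, a μ := by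
      intro a ha
      by_contra hlt
      push_neg at hlt
      interval_cases h : (∑ μ, a μ)
      · apply ha
        have : a = 0 := funext fun μ =>
          (Finset.sum_eq_zero_iff.1 h) μ (Finset.mem_univ μ)
        rw [this, hSdef]
        exact Finset.mem_insert_self _ _
      · obtain ⟨μ, hμ⟩ : ∃ μ, a μ ≠ 0 := by
          by_contra hall
          push_neg at hall
          rw [Finset.sum_eq_zero (fun μ _ => hall μ)] at h
          omega
        have hle : a μ ≤ 1 := h ▸ Finset.single_le_sum (f := a)
          (fun _ _ => Nat.zero_le _) (Finset.mem_univ μ)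
        have haμ : a μ = 1 := by omega
        have hrest : ∑ ν ∈ Finset.univ.erase μ, a ν = 0 := by
          have := Finset.add_sum_erase Finset.univ a (Finset.mem_univ μ)
          omega
        have : a = Pi.single μ 1 := by
          funext ν
          by_cases hν : ν = μ
          · rw [hν, Pi.single_eq_same, haμ]
          · rw [Pi.single_eq_of_ne hν]
            exact (Finset.sum_eq_zero_iff.1 hrest) ν
              (Finset.mem_erase.2 ⟨hν, Finset.mem_univ ν⟩)
        apply ha
        rw [this, hSdef]
        exact Finset.mem_insert_of_mem
          (Finset.mem_image.2 ⟨μ, Finset.mem_univ μ, rfl⟩)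
    refine ⟨CG + c * CF + 1, by positivity, ?_⟩
    rintro τ ⟨hτ0, hτ1⟩
    have hτsq : (0 : ℝ) ≤ τ ^ 2 := by positivity
    -- the G-side remainder
    have hGsum : HasSum (fun k => (τ : ℂ) ^ k * G k) (phiFun ℓ (τ • K) i j) :=
      phi_entry_tau ℓ K i j τ
    have hrange : ∑ k ∈ Finset.range 2, (τ : ℂ) ^ k * G k = G 0 + (τ : ℂ) * G 1 := by
      rw [Finset.sum_range_succ, Finset.sum_range_one]
      ring
    have hshift : HasSum (fun k => (τ : ℂ) ^ (k + 2) * G (k + 2))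
        (phiFun ℓ (τ • K) i j - (G 0 + (τ : ℂ) * G 1)) := by
      rw [← hrange]
      exact (hasSum_nat_add_iff' 2).2 hGsum
    have hGrem : ‖phiFun ℓ (τ • K) i j - (G 0 + (τ : ℂ) * G 1)‖ ≤ CG * τ ^ 2 := by
      rw [← hshift.tsum_eq]
      have hterm : ∀ k : ℕ, ‖(τ : ℂ) ^ (k + 2) * G (k + 2)‖ ≤ τ ^ 2 * ‖G (k + 2)‖ := by
        intro k
        rw [norm_mul, norm_pow, Complex.norm_real, Real.norm_of_nonneg hτ0]
        exact mul_le_mul_of_nonneg_right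
          (pow_le_pow_of_le_one hτ0 hτ1 (by omega)) (norm_nonneg _)
      have hs1 : Summable (fun k => ‖(τ : ℂ) ^ (k + 2) * G (k + 2)‖) :=
        Summable.of_nonneg_of_le (fun _ => norm_nonneg _) hterm (hGs2.mul_left _)
      calc ‖∑' k, (τ : ℂ) ^ (k + 2) * G (k + 2)‖ ≤ ∑' k, ‖(τ : ℂ) ^ (k + 2) * G (k + 2)‖ :=
            norm_tsum_le_tsum_norm hs1
        _ ≤ ∑' k, τ ^ 2 * ‖G (k + 2)‖ := Summable.tsum_le_tsum hterm hs1 (hGs2.mul_left _)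
        _ = τ ^ 2 * CG := tsum_mul_left
        _ = CG * τ ^ 2 := by ring
    -- the F-side remainder
    have hFsum : HasSum (fun a : Fin (e + 1) → ℕ => (τ : ℂ) ^ (∑ μ, a μ) * F a)
        (P ℓ τ i j) := by
      rw [hP ℓ τ i j]
      exact P_entry_hasSum ℓ A τ i j
    have hScompl : HasSum (fun a : ↑((↑S : Set (Fin (e + 1) → ℕ))ᶜ) =>
        (τ : ℂ) ^ (∑ μ, (a : Fin (e + 1) → ℕ) μ) * F a)
        (P ℓ τ i j - ∑ a ∈ S, (τ : ℂ) ^ (∑ μ, a μ) * F a) :=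
      (Finset.hasSum_compl_iff (f := fun a : Fin (e + 1) → ℕ => (τ : ℂ) ^ (∑ μ, a μ) * F a) S).2 (by rwa [sub_add_cancel])
    have hSsum : ∑ a ∈ S, (τ : ℂ) ^ (∑ μ, a μ) * F a =
        F 0 + (τ : ℂ) * ∑ μ, F (Pi.single μ 1) := by
      rw [hSdef, Finset.sum_insert h0S, Finset.sum_image hinj]
      congr 1
      · simp
      · rw [Finset.mul_sum]
        refine Finset.sum_congr rfl fun μ _ => ?_
        rw [Finset.sum_pi_single']
        simp
    have hFrem : ‖P ℓ τ i j - (F 0 + (τ : ℂ) * ∑ μ, F (Pi.single μ 1))‖ ≤ CF * τ ^ 2 := by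
      rw [← hSsum, ← hScompl.tsum_eq]
      have hterm : ∀ a : ↑((↑S : Set (Fin (e + 1) → ℕ))ᶜ),
          ‖(τ : ℂ) ^ (∑ μ, (a : Fin (e + 1) → ℕ) μ) * F a‖ ≤ τ ^ 2 * ‖F a‖ := by
        rintro ⟨a, ha⟩
        rw [norm_mul, norm_pow, Complex.norm_real, Real.norm_of_nonneg hτ0]
        exact mul_le_mul_of_nonneg_right
          (pow_le_pow_of_le_one hτ0 hτ1 (hdeg a ha)) (norm_nonneg _)
      have hs1 : Summable (fun a : ↑((↑S : Set (Fin (e + 1) → ℕ))ᶜ) =>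
          ‖(τ : ℂ) ^ (∑ μ, (a : Fin (e + 1) → ℕ) μ) * F a‖) :=
        Summable.of_nonneg_of_le (fun _ => norm_nonneg _) hterm (hFsc.mul_left _)
      calc ‖∑' a : ↑((↑S : Set (Fin (e + 1) → ℕ))ᶜ),
              (τ : ℂ) ^ (∑ μ, (a : Fin (e + 1) → ℕ) μ) * F a‖
            ≤ ∑' a : ↑((↑S : Set (Fin (e + 1) → ℕ))ᶜ),
              ‖(τ : ℂ) ^ (∑ μ, (a : Fin (e + 1) → ℕ) μ) * F a‖ := norm_tsum_le_tsum_norm hs1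
        _ ≤ ∑' a : ↑((↑S : Set (Fin (e + 1) → ℕ))ᶜ), τ ^ 2 * ‖F a‖ :=
            Summable.tsum_le_tsum hterm hs1 (hFsc.mul_left _)
        _ = τ ^ 2 * CF := tsum_mul_left
        _ = CF * τ ^ 2 := by ring
    -- assemble
    have hsplit : phiFun ℓ (τ • K) i j - (ℓ.factorial : ℂ) ^ e * P ℓ τ i j =
        (phiFun ℓ (τ • K) i j - (G 0 + (τ : ℂ) * G 1)) -
          (ℓ.factorial : ℂ) ^ e * (P ℓ τ i j - (F 0 + (τ : ℂ) * ∑ μ, F (Pi.single μ 1))) := by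
      linear_combination hcan τ
    rw [hsplit]
    calc ‖(phiFun ℓ (τ • K) i j - (G 0 + (τ : ℂ) * G 1)) -
          (ℓ.factorial : ℂ) ^ e * (P ℓ τ i j - (F 0 + (τ : ℂ) * ∑ μ, F (Pi.single μ 1)))‖
        ≤ ‖phiFun ℓ (τ • K) i j - (G 0 + (τ : ℂ) * G 1)‖ +
          c * ‖P ℓ τ i j - (F 0 + (τ : ℂ) * ∑ μ, F (Pi.single μ 1))‖ := by
          rw [hcdef]
          refine (norm_sub_le _ _).trans ?_
          rw [norm_mul]
      _ ≤ CG * τ ^ 2 + c * (CF * τ ^ 2) := by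
          gcongr
      _ ≤ (CG + c * CF + 1) * τ ^ 2 := by nlinarith

  choose Cf hCfpos hCfb using key
  have hNE : Nonempty (∀ μ, Fin (n μ)) := ⟨fun μ => ⟨0, hn μ⟩⟩
  have hsum0 : 0 ≤ ∑ i, ∑ j, Cf i j :=
    Finset.sum_nonneg fun i _ => Finset.sum_nonneg fun j _ => (hCfpos i j).le
  refine ⟨(∑ i, ∑ j, Cf i j) + 1, by linarith, ?_⟩
  · intro τ hτ
    have hτsq : (0 : ℝ) ≤ τ ^ 2 := by positivity
    have hCle : ∀ i j, Cf i j ≤ (∑ i, ∑ j, Cf i j) + 1 := by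
      intro i j
      have h1 : Cf i j ≤ ∑ j', Cf i j' :=
        Finset.single_le_sum (fun j' _ => (hCfpos i j').le) (Finset.mem_univ j)
      have h2 : (∑ j', Cf i j') ≤ ∑ i', ∑ j', Cf i' j' :=
        Finset.single_le_sum (f := fun i' => ∑ j', Cf i' j')
          (fun i' _ => Finset.sum_nonneg fun j' _ => (hCfpos i' j').le) (Finset.mem_univ i)
      linarith
    rw [Matrix.norm_le_iff (mul_nonneg (by linarith) hτsq)]
    intro i j
    have := hCfb i j τ hτ
    calc ‖(phiFun ℓ (τ • K) - (ℓ.factorial : ℂ) ^ e • P ℓ τ) i j‖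
        = ‖phiFun ℓ (τ • K) i j - (ℓ.factorial : ℂ) ^ e * P ℓ τ i j‖ := by
          simp [Matrix.sub_apply, Matrix.smul_apply, smul_eq_mul]
      _ ≤ Cf i j * τ ^ 2 := this
      _ ≤ ((∑ i, ∑ j, Cf i j) + 1) * τ ^ 2 :=
          mul_le_mul_of_nonneg_right (hCle i j) hτsq
end

section
/- For every square complex matrix X and every integer ℓ ≥ 1, the integral definition and the series definition of the matrix φ-function agree: (1/(ℓ−1)!) ∫_0^1 e^{(1−θ)X} θ^{ℓ−1} dθ = Σ_{i=0}^∞ X^i/(i+ℓ)!. -/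
open scoped Matrix

attribute [local instance] Matrix.normedAddCommGroup Matrix.normedSpace

-- factorial product identity
lemma fact_prod_nat (m i : ℕ) :
    m.factorial * ∏ j ∈ Finset.range (i + 1), (m + 1 + j) = (m + i + 1).factorial := by
  induction i with
  | zero => simp [Nat.factorial_succ, mul_comm]
  | succ i ih =>
      rw [Finset.prod_range_succ, ← mul_assoc, ih]
      have : m + (i + 1) + 1 = (m + i + 1) + 1 := by omega
      rw [this]
      conv_rhs => rw [Nat.factorial_succ]
      ring

lemma beta_real (m i : ℕ) :
    ∫ x in (0:ℝ)..1, x ^ m * (1 - x) ^ i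
      = (m.factorial * i.factorial : ℝ) / ((m + i + 1).factorial) := by
  have hu : 0 < Complex.re ((m : ℂ) + 1) := by simp; positivity
  have h := Complex.betaIntegral_eval_nat_add_one_right hu i
  have hb : Complex.betaIntegral ((m : ℂ) + 1) ((i : ℂ) + 1)
      = ((∫ x in (0:ℝ)..1, x ^ m * (1 - x) ^ i : ℝ) : ℂ) := by
    rw [Complex.betaIntegral]
    rw [← intervalIntegral.integral_ofReal]
    congr 1
    funext x
    push_cast
    rw [add_sub_cancel_right, add_sub_cancel_right, Complex.cpow_natCast, Complex.cpow_natCast]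
  rw [hb] at h
  have hprod : (m.factorial : ℂ) * ∏ j ∈ Finset.range (i + 1), ((m : ℂ) + 1 + j)
      = ((m + i + 1).factorial : ℂ) := by
    rw [← fact_prod_nat m i]
    push_cast
    ring
  have hm : (m.factorial : ℂ) ≠ 0 := Nat.cast_ne_zero.mpr m.factorial_ne_zero
  have hmi : ((m + i + 1).factorial : ℂ) ≠ 0 := Nat.cast_ne_zero.mpr (Nat.factorial_ne_zero _)
  have hprod_ne : (∏ j ∈ Finset.range (i + 1), ((m : ℂ) + 1 + j)) ≠ 0 := by
    intro h0
    rw [h0, mul_zero] at hprod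
    exact hmi hprod.symm
  have : ((∫ x in (0:ℝ)..1, x ^ m * (1 - x) ^ i : ℝ) : ℂ)
      = ((m.factorial * i.factorial : ℝ) / ((m + i + 1).factorial) : ℝ) := by
    rw [h]
    push_cast
    field_simp
    linear_combination (-(i.factorial : ℂ)) * hprod
  exact_mod_cast this

section matnorm

variable {n : Type*} [Fintype n] [DecidableEq n]

lemma mat_mul_norm_le (A B : Matrix n n ℂ) :
    ‖A * B‖ ≤ (Fintype.card n) * ‖A‖ * ‖B‖ := by
  rw [Matrix.norm_le_iff (by positivity)]
  intro a b
  rw [Matrix.mul_apply]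
  calc ‖∑ c, A a c * B c b‖ ≤ ∑ c, ‖A a c * B c b‖ := norm_sum_le _ _
    _ ≤ ∑ _c : n, ‖A‖ * ‖B‖ := by
        refine Finset.sum_le_sum fun c _ => ?_
        rw [norm_mul]
        exact mul_le_mul (A.norm_entry_le_entrywise_sup_norm)
          (B.norm_entry_le_entrywise_sup_norm) (norm_nonneg _) (norm_nonneg _)
    _ = (Fintype.card n) * ‖A‖ * ‖B‖ := by
        rw [Finset.sum_const, Finset.card_univ, nsmul_eq_mul, mul_assoc]

lemma mat_norm_pow_le (X : Matrix n n ℂ) (i : ℕ) :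
    ‖X ^ i‖ ≤ ((Fintype.card n) * ‖X‖) ^ i := by
  induction i with
  | zero =>
      simp only [pow_zero]
      rw [Matrix.norm_le_iff zero_le_one]
      intro a b
      rw [Matrix.one_apply]
      split <;> simp
  | succ i ih =>
      rw [pow_succ]
      calc ‖X ^ i * X‖ ≤ (Fintype.card n) * ‖X ^ i‖ * ‖X‖ := mat_mul_norm_le _ _
        _ ≤ (Fintype.card n) * ((Fintype.card n) * ‖X‖) ^ i * ‖X‖ := by
            have h1 : (0:ℝ) ≤ Fintype.card n := by positivity
            gcongr
        _ = ((Fintype.card n) * ‖X‖) ^ (i + 1) := by ring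

lemma summable_norm_coeff (X : Matrix n n ℂ) :
    Summable fun i : ℕ => ‖((i.factorial : ℂ))⁻¹ • X ^ i‖ := by
  refine Summable.of_nonneg_of_le (fun i => norm_nonneg _) (fun i => ?_)
    (Real.summable_pow_div_factorial ((Fintype.card n) * ‖X‖))
  rw [norm_smul, norm_inv, Complex.norm_natCast, div_eq_inv_mul]
  exact mul_le_mul_of_nonneg_left (mat_norm_pow_le X i) (by positivity)

end matnorm


theorem phi_integral_eq_series {n : Type*} [Fintype n] [DecidableEq n]
    (X : Matrix n n ℂ) (ℓ : ℕ) (hℓ : 1 ≤ ℓ) :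
    ((ℓ - 1).factorial : ℂ)⁻¹ •
        ∫ θ in (0 : ℝ)..1, θ ^ (ℓ - 1) • NormedSpace.exp ((1 - θ) • X) =
      phiFun ℓ X := by
  classical
  set c : ℕ → Matrix n n ℂ := fun i => ((i.factorial : ℂ))⁻¹ • X ^ i with hc
  set F : ℕ → ℝ → Matrix n n ℂ := fun i θ => (θ ^ (ℓ - 1) * (1 - θ) ^ i) • c i with hF
  have hs : ∀ θ : ℝ, θ ^ (ℓ - 1) • NormedSpace.exp ((1 - θ) • X) = ∑' i, F i θ := by
    intro θ
    rw [NormedSpace.exp_eq_tsum (𝕂 := ℂ), ← tsum_const_smul'' (θ ^ (ℓ - 1))]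
    congr 1
    funext i
    rw [smul_pow, smul_comm ((i.factorial : ℂ))⁻¹, smul_smul]
  have hFcont : ∀ i, Continuous (F i) := by
    intro i
    exact ((continuous_pow _).mul ((continuous_const.sub continuous_id).pow i)).smul
      continuous_const
  have hFint : ∀ i, @MeasureTheory.IntegrableOn _ _ _ _ SeminormedAddGroup.toContinuousENorm
      (F i) (Set.Ioc (0:ℝ) 1) MeasureTheory.volume := fun i =>
    (hFcont i).integrableOn_Ioc
  have hFsum : Summable fun i => ∫ θ in Set.Ioc (0:ℝ) 1, ‖F i θ‖ := by
    refine Summable.of_nonneg_of_le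
      (fun i => MeasureTheory.integral_nonneg fun θ => norm_nonneg _) (fun i => ?_)
      (summable_norm_coeff X)
    calc ∫ θ in Set.Ioc (0:ℝ) 1, ‖F i θ‖
        ≤ ∫ _θ in Set.Ioc (0:ℝ) 1, ‖c i‖ := by
          refine MeasureTheory.setIntegral_mono_on (hFint i).norm
            (MeasureTheory.integrableOn_const (by simp)) measurableSet_Ioc
            fun θ hθ => ?_
          rw [hF, norm_smul]
          have h1 : |θ ^ (ℓ - 1) * (1 - θ) ^ i| ≤ 1 := by
            rw [abs_mul]
            have hθ1 : 0 < θ := hθ.1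
            have hθ2 : θ ≤ 1 := hθ.2
            have : |θ ^ (ℓ - 1)| ≤ 1 := by
              rw [abs_pow]
              exact pow_le_one₀ (abs_nonneg _) (abs_le.mpr ⟨by linarith, hθ2⟩)
            have h2 : |(1 - θ) ^ i| ≤ 1 := by
              rw [abs_pow]
              exact pow_le_one₀ (abs_nonneg _) (abs_le.mpr ⟨by linarith, by linarith⟩)
            exact mul_le_one₀ this (abs_nonneg _) h2
          calc ‖θ ^ (ℓ - 1) * (1 - θ) ^ i‖ * ‖c i‖ ≤ 1 * ‖c i‖ := by
                gcongr
                exact h1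
            _ = ‖c i‖ := one_mul _
      _ = ‖c i‖ := by simp [Real.volume_Ioc]
  rw [intervalIntegral.integral_of_le (zero_le_one)]
  simp only [hs]
  erw [← MeasureTheory.integral_tsum_of_summable_integral_norm hFint hFsum]
  have hval : ∀ i : ℕ, (∫ θ in Set.Ioc (0:ℝ) 1, F i θ)
      = ((((ℓ-1).factorial * i.factorial : ℝ)) / (((ℓ-1) + i + 1).factorial)) • c i := by
    intro i
    rw [hF]
    simp only
    rw [integral_smul_const, ← intervalIntegral.integral_of_le (zero_le_one),
      beta_real]
  simp only [hval]
  rw [← tsum_const_smul'' (((ℓ-1).factorial : ℂ))⁻¹]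
  rw [phiFun]
  refine tsum_congr fun i => ?_
  rw [← algebraMap_smul ℂ ((((ℓ-1).factorial * i.factorial : ℝ)) / (((ℓ-1) + i + 1).factorial)) (c i), hc]
  simp only [Complex.coe_algebraMap]
  rw [smul_smul, smul_smul]
  congr 1
  have hi : (ℓ - 1) + i + 1 = i + ℓ := by omega
  rw [hi]
  have h1 : (((ℓ-1).factorial : ℂ)) ≠ 0 := Nat.cast_ne_zero.mpr (Nat.factorial_ne_zero _)
  have h2 : ((i.factorial : ℂ)) ≠ 0 := Nat.cast_ne_zero.mpr (Nat.factorial_ne_zero _)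
  have h3 : (((i + ℓ).factorial : ℂ)) ≠ 0 := Nat.cast_ne_zero.mpr (Nat.factorial_ne_zero _)
  push_cast
  field_simp
end

section
/- Let X be a square complex matrix and ℓ ≥ 1 an integer. Then the following squaring recurrence holds: φ_ℓ(2X) = (1/2^ℓ) [ e^X φ_ℓ(X) + Σ_{k=1}^{ℓ} φ_k(X)/(ℓ−k)! ]. -/
open scoped Matrix

section aux

attribute [local instance] Matrix.linftyOpNormedAddCommGroup Matrix.linftyOpNormedRing
  Matrix.linftyOpNormedAlgebra

variable {n : Type*} [Fintype n] [DecidableEq n] [Nonempty n]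

lemma phi_summable_norm (ℓ : ℕ) (X : Matrix n n ℂ) :
    Summable fun i : ℕ => ‖((i + ℓ).factorial : ℂ)⁻¹ • X ^ i‖ := by
  apply Summable.of_nonneg_of_le (fun i => norm_nonneg _) (fun i => ?_)
    (Real.summable_pow_div_factorial ‖X‖)
  rw [norm_smul]
  have h1 : ‖(((i + ℓ).factorial : ℂ))⁻¹‖ ≤ ((i.factorial : ℝ))⁻¹ := by
    rw [norm_inv, Complex.norm_natCast]
    exact inv_anti₀ (by positivity)
      (Nat.cast_le.2 (Nat.factorial_le (Nat.le_add_right _ _)))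
  calc ‖(((i + ℓ).factorial : ℂ))⁻¹‖ * ‖X ^ i‖
      ≤ ((i.factorial : ℝ))⁻¹ * ‖X‖ ^ i := by
        apply mul_le_mul h1 (norm_pow_le X i) (norm_nonneg _) (by positivity)
    _ = ‖X‖ ^ i / i.factorial := by ring

lemma phi_summable (ℓ : ℕ) (X : Matrix n n ℂ) :
    Summable fun i : ℕ => ((i + ℓ).factorial : ℂ)⁻¹ • X ^ i :=
  (phi_summable_norm ℓ X).of_norm

lemma phi_coeff_tsum (ℓ : ℕ) (X : Matrix n n ℂ) (c : ℂ) :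
    c • phiFun ℓ X = ∑' m : ℕ, (c * ((m + ℓ).factorial : ℂ)⁻¹) • X ^ m := by
  unfold phiFun
  rw [← Summable.tsum_const_smul c (phi_summable ℓ X)]
  exact tsum_congr fun m => smul_smul _ _ _

lemma exp_mul_phi (ℓ : ℕ) (X : Matrix n n ℂ) :
    NormedSpace.exp X * phiFun ℓ X =
      ∑' m : ℕ, (∑ pq ∈ Finset.HasAntidiagonal.antidiagonal m,
        ((pq.1.factorial : ℂ)⁻¹ * ((pq.2 + ℓ).factorial : ℂ)⁻¹)) • X ^ m := by
  have h0 : Summable fun i : ℕ => ‖(i.factorial : ℂ)⁻¹ • X ^ i‖ := by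
    simpa using phi_summable_norm 0 X
  rw [NormedSpace.exp_eq_tsum (𝕂 := ℂ)]
  simp only [phiFun]
  erw [tsum_mul_tsum_eq_tsum_sum_antidiagonal_of_summable_norm h0 (phi_summable_norm ℓ X)]
  refine tsum_congr fun m => ?_
  rw [Finset.sum_smul]
  refine Finset.sum_congr rfl fun pq hpq => ?_
  rw [Finset.HasAntidiagonal.mem_antidiagonal] at hpq
  rw [smul_mul_smul_comm, ← pow_add, hpq]

lemma exp_mul_phi_summable (ℓ : ℕ) (X : Matrix n n ℂ) :
    Summable fun m : ℕ => (∑ pq ∈ Finset.HasAntidiagonal.antidiagonal m,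
        ((pq.1.factorial : ℂ)⁻¹ * ((pq.2 + ℓ).factorial : ℂ)⁻¹)) • X ^ m := by
  have h0 : Summable fun i : ℕ => ‖(i.factorial : ℂ)⁻¹ • X ^ i‖ := by
    simpa using phi_summable_norm 0 X
  have h := (summable_norm_sum_mul_antidiagonal_of_summable_norm h0
    (phi_summable_norm ℓ X)).of_norm
  refine h.congr fun m => ?_
  rw [Finset.sum_smul]
  refine Finset.sum_congr rfl fun pq hpq => ?_
  rw [Finset.HasAntidiagonal.mem_antidiagonal] at hpq
  rw [smul_mul_smul_comm, ← pow_add, hpq]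

end aux

-- Nat combinatorial identity
lemma nat_choose_split (m ℓ : ℕ) :
    ∑ p ∈ Finset.range (m + 1), (m + ℓ).choose p
      + ∑ j ∈ Finset.range ℓ, (m + ℓ).choose j = 2 ^ (m + ℓ) := by
  have h1 : ∑ j ∈ Finset.range ℓ, (m + ℓ).choose j
      = ∑ q ∈ Finset.Ico (m + 1) (m + ℓ + 1), (m + ℓ).choose q := by
    refine Finset.sum_nbij' (i := fun j => m + ℓ - j) (j := fun q => m + ℓ - q)
      ?_ ?_ ?_ ?_ ?_
    · intro a ha; simp only [Finset.mem_range] at ha; simp only [Finset.mem_Ico]; omega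
    · intro a ha; simp only [Finset.mem_Ico] at ha; simp only [Finset.mem_range]; omega
    · intro a ha; simp only [Finset.mem_range] at ha
      show m + ℓ - (m + ℓ - a) = a; omega
    · intro a ha; simp only [Finset.mem_Ico] at ha
      show m + ℓ - (m + ℓ - a) = a; omega
    · intro a ha; simp only [Finset.mem_range] at ha
      exact (Nat.choose_symm (by omega)).symm
  rw [h1]
  rw [Finset.range_eq_Ico, Finset.sum_Ico_consecutive _ (Nat.zero_le _) (by omega),
    ← Finset.range_eq_Ico]
  exact Nat.sum_range_choose (m + ℓ)

lemma nat_icc_choose (N m ℓ : ℕ) :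
    ∑ k ∈ Finset.Icc 1 ℓ, N.choose (ℓ - k) = ∑ j ∈ Finset.range ℓ, N.choose j := by
  refine Finset.sum_nbij' (i := fun k => ℓ - k) (j := fun j => ℓ - j) ?_ ?_ ?_ ?_ ?_
  · intro a ha; simp only [Finset.mem_Icc] at ha; simp only [Finset.mem_range]; omega
  · intro a ha; simp only [Finset.mem_range] at ha; simp only [Finset.mem_Icc]; omega
  · intro a ha; simp only [Finset.mem_Icc] at ha
    show ℓ - (ℓ - a) = a; omega
  · intro a ha; simp only [Finset.mem_range] at ha
    show ℓ - (ℓ - a) = a; omega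
  · intro a ha; rfl

lemma coeff_identity (m ℓ : ℕ) :
    (2 : ℂ) ^ (m + ℓ) * (((m + ℓ).factorial : ℂ))⁻¹ =
      (∑ pq ∈ Finset.HasAntidiagonal.antidiagonal m,
        ((pq.1.factorial : ℂ)⁻¹ * ((pq.2 + ℓ).factorial : ℂ)⁻¹))
      + ∑ k ∈ Finset.Icc 1 ℓ, ((ℓ - k).factorial : ℂ)⁻¹ * ((m + k).factorial : ℂ)⁻¹ := by
  have hne : ∀ a : ℕ, ((a.factorial : ℂ)) ≠ 0 :=
    fun a => Nat.cast_ne_zero.2 (Nat.factorial_ne_zero a)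
  rw [Finset.Nat.sum_antidiagonal_eq_sum_range_succ_mk]
  have h1 : ∀ p ∈ Finset.range (m + 1),
      (p.factorial : ℂ)⁻¹ * (((m - p) + ℓ).factorial : ℂ)⁻¹
        = ((m + ℓ).choose p : ℂ) * ((m + ℓ).factorial : ℂ)⁻¹ := by
    intro p hp
    rw [Finset.mem_range] at hp
    have hc : (((m + ℓ).choose p : ℕ) : ℂ) ≠ 0 :=
      Nat.cast_ne_zero.2 (Nat.choose_pos (by omega)).ne'
    have hb := Nat.choose_mul_factorial_mul_factorial (show p ≤ m + ℓ by omega)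
    rw [show m + ℓ - p = (m - p) + ℓ by omega] at hb
    have hb' : (((m + ℓ).choose p : ℂ)) * (p.factorial : ℂ) * (((m - p) + ℓ).factorial : ℂ)
        = ((m + ℓ).factorial : ℂ) := by exact_mod_cast congrArg (Nat.cast : ℕ → ℂ) hb
    rw [← hb']
    field_simp
  have h2 : ∀ k ∈ Finset.Icc 1 ℓ,
      ((ℓ - k).factorial : ℂ)⁻¹ * ((m + k).factorial : ℂ)⁻¹
        = ((m + ℓ).choose (ℓ - k) : ℂ) * ((m + ℓ).factorial : ℂ)⁻¹ := by
    intro k hk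
    rw [Finset.mem_Icc] at hk
    have hc : (((m + ℓ).choose (ℓ - k) : ℕ) : ℂ) ≠ 0 :=
      Nat.cast_ne_zero.2 (Nat.choose_pos (by omega)).ne'
    have hb := Nat.choose_mul_factorial_mul_factorial (show ℓ - k ≤ m + ℓ by omega)
    rw [show m + ℓ - (ℓ - k) = m + k by omega] at hb
    have hb' : (((m + ℓ).choose (ℓ - k) : ℂ)) * ((ℓ - k).factorial : ℂ) * ((m + k).factorial : ℂ)
        = ((m + ℓ).factorial : ℂ) := by exact_mod_cast congrArg (Nat.cast : ℕ → ℂ) hb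
    rw [← hb']
    field_simp
  rw [Finset.sum_congr rfl h1, Finset.sum_congr rfl h2, ← Finset.sum_mul, ← Finset.sum_mul,
    ← add_mul]
  congr 1
  have h3 := nat_choose_split m ℓ
  rw [← nat_icc_choose (m + ℓ) m ℓ] at h3
  have h4 := congrArg (Nat.cast : ℕ → ℂ) h3
  push_cast at h4
  exact h4.symm

theorem phi_squaring_recurrence {n : Type*} [Fintype n] [DecidableEq n]
    (X : Matrix n n ℂ) (ℓ : ℕ) (hℓ : 1 ≤ ℓ) :
    phiFun ℓ ((2 : ℂ) • X) =
      ((2 : ℂ) ^ ℓ)⁻¹ •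
        (NormedSpace.exp X * phiFun ℓ X +
          ∑ k ∈ Finset.Icc 1 ℓ, ((ℓ - k).factorial : ℂ)⁻¹ • phiFun k X) := by
  rcases isEmpty_or_nonempty n with hn | hn
  · haveI : Subsingleton (Matrix n n ℂ) :=
      ⟨fun a b => by ext i j; exact (IsEmpty.false i).elim⟩
    exact Subsingleton.elim _ _
  letI := Matrix.linftyOpNormedAddCommGroup (α := ℂ) (m := n) (n := n)
  letI := Matrix.linftyOpNormedRing (α := ℂ) (n := n)
  letI := Matrix.linftyOpNormedAlgebra (α := ℂ) (n := n) (R := ℂ)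
  rw [eq_inv_smul_iff₀ (pow_ne_zero ℓ (two_ne_zero : (2:ℂ) ≠ 0))]
  -- LHS
  have hL : (2 : ℂ) ^ ℓ • phiFun ℓ ((2 : ℂ) • X)
      = ∑' m : ℕ, ((2 : ℂ) ^ (m + ℓ) * ((m + ℓ).factorial : ℂ)⁻¹) • X ^ m := by
    rw [phi_coeff_tsum]
    refine tsum_congr fun m => ?_
    rw [smul_pow, smul_smul]
    congr 1
    rw [pow_add]
    ring
  -- second sum
  have hSB : ∀ k ∈ Finset.Icc 1 ℓ, Summable fun m : ℕ =>
      (((ℓ - k).factorial : ℂ)⁻¹ * ((m + k).factorial : ℂ)⁻¹) • X ^ m := by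
    intro k _
    refine ((phi_summable k X).const_smul (((ℓ - k).factorial : ℂ)⁻¹)).congr fun m => ?_
    rw [smul_smul]
  have hS : ∑ k ∈ Finset.Icc 1 ℓ, ((ℓ - k).factorial : ℂ)⁻¹ • phiFun k X
      = ∑' m : ℕ, (∑ k ∈ Finset.Icc 1 ℓ,
          ((ℓ - k).factorial : ℂ)⁻¹ * ((m + k).factorial : ℂ)⁻¹) • X ^ m := by
    rw [Finset.sum_congr rfl fun k hk => phi_coeff_tsum k X (((ℓ - k).factorial : ℂ)⁻¹),
      ← Summable.tsum_finsetSum hSB]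
    exact tsum_congr fun m => (Finset.sum_smul).symm
  have hSBsum : Summable fun m : ℕ => (∑ k ∈ Finset.Icc 1 ℓ,
      ((ℓ - k).factorial : ℂ)⁻¹ * ((m + k).factorial : ℂ)⁻¹) • X ^ m := by
    refine (summable_sum hSB).congr fun m => ?_
    rw [Finset.sum_smul]
  rw [hL, exp_mul_phi, hS, ← Summable.tsum_add (exp_mul_phi_summable ℓ X) hSBsum]
  exact tsum_congr fun m => by rw [← add_smul, ← coeff_identity m ℓ]
end
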